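/- The ordered monomials a_{22}^{n_1} a_{11}^{n_2} a_{12}^{n_3} a_{21}^{n_4}, as (n_1, n_2, n_3, n_4) ranges over ℕ^4, form a k-vector space basis of the reflection equation algebra O_q(Mat_2). -/

import Mathlib

noncomputable section

open Matrix

/-- The ground field `k = ℂ(q^{1/2})`. -/
abbrev K : Type := RatFunc ℂ

/-- `q^{1/2}`, the generating variable of `K = ℂ(q^{1/2})`. -/
def qh : K := RatFunc.X

/-- The quantum parameter `q = (q^{1/2})^2`. -/
def qq : K := qh ^ 2

/-- The reflection equation (RE) relations for a 2×2 matrix of elements,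
with `A i j` playing the role of `a_{(i+1)(j+1)}`. -/
inductive ReRel {F : Type} [Ring F] [Algebra K F] (A : Matrix (Fin 2) (Fin 2) F) : F → F → Prop
  | r1 : ReRel A (A 0 1 * A 0 0 - A 0 0 * A 0 1) ((-((qq ^ 2)⁻¹ - 1)) • (A 0 1 * A 1 1))
  | r2 : ReRel A (A 1 1 * A 0 0) (A 0 0 * A 1 1)
  | r3 : ReRel A (A 1 0 * A 0 0 - A 0 0 * A 1 0) (((qq ^ 2)⁻¹ - 1) • (A 1 1 * A 1 0))
  | r4 : ReRel A (A 1 1 * A 0 1) ((qq ^ 2) • (A 0 1 * A 1 1))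
  | r5 : ReRel A (A 1 0 * A 0 1 - A 0 1 * A 1 0)
      ((-((qq ^ 2)⁻¹ - 1)) • (A 0 0 * A 1 1 - A 1 1 * A 1 1))
  | r6 : ReRel A (A 1 1 * A 1 0) (((qq ^ 2)⁻¹) • (A 1 0 * A 1 1))

/-- Generators of the reflection equation algebra `O_q(Mat_2)`. -/
inductive MatGen : Type | g (i j : Fin 2)

abbrev FO := FreeAlgebra K MatGen

def OA : Matrix (Fin 2) (Fin 2) FO := fun i j => FreeAlgebra.ι K (MatGen.g i j)

/-- The reflection equation algebra `O_q(Mat_2)`. -/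
abbrev OqM2 := RingQuot (ReRel OA)

/-- The generator `a_{(i+1)(j+1)}` of `O_q(Mat_2)`. -/
def oa (i j : Fin 2) : OqM2 := RingQuot.mkAlgHom K (ReRel OA) (OA i j)

/-- The quantum determinant `det_q = a₁₁a₂₂ - q² a₁₂a₂₁` of `O_q(Mat_2)`. -/
def detq : OqM2 := oa 0 0 * oa 1 1 - (qq ^ 2) • (oa 0 1 * oa 1 0)

/-- The quantum trace `tr_q = a₁₁ + q⁻² a₂₂` of `O_q(Mat_2)`. -/
def trq : OqM2 := oa 0 0 + ((qq ^ 2)⁻¹) • oa 1 1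


set_option maxHeartbeats 1000000
set_option synthInstance.maxHeartbeats 400000

namespace PBWAux

abbrev Idx : Type := ℕ × ℕ × ℕ × ℕ
abbrev V : Type := Idx →₀ K

def vv (a b c d : ℕ) : V := Finsupp.single (a, b, c, d) 1

def tt : K := (qq ^ 2)⁻¹

lemma qq2_ne : (qq ^ 2 : K) ≠ 0 := by
  apply pow_ne_zero
  show (qh ^ 2 : K) ≠ 0
  exact pow_ne_zero _ RatFunc.X_ne_zero

lemma tt_ne : tt ≠ 0 := inv_ne_zero qq2_ne

lemma tt_inv : tt⁻¹ = qq ^ 2 := inv_inv _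

def Ld : V →ₗ[K] V := Finsupp.lmapDomain K K fun p => (p.1 + 1, p.2)
def La : V →ₗ[K] V := Finsupp.lmapDomain K K fun p => (p.1, p.2.1 + 1, p.2.2)

@[simp] lemma Ld_vv (a b c d : ℕ) : Ld (vv a b c d) = vv (a+1) b c d := by
  simp [Ld, vv, Finsupp.lmapDomain_apply, Finsupp.mapDomain_single]

@[simp] lemma La_vv (a b c d : ℕ) : La (vv a b c d) = vv a (b+1) c d := by
  simp [La, vv, Finsupp.lmapDomain_apply, Finsupp.mapDomain_single]

def lbv : ℕ → ℕ → ℕ → ℕ → V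
  | a+1, b, c, d => tt • Ld (lbv a b c d)
  | 0, b+1, c, d => La (lbv 0 b c d) + (tt - tt ^ 2) • Ld (lbv 0 b c d)
  | 0, 0, c, d => vv 0 0 (c+1) d

def Lb : V →ₗ[K] V :=
  (Finsupp.basisSingleOne (ι := Idx) (R := K)).constr K fun p : Idx => lbv p.1 p.2.1 p.2.2.1 p.2.2.2

@[simp] lemma Lb_vv (a b c d : ℕ) : Lb (vv a b c d) = lbv a b c d := by
  have := (Finsupp.basisSingleOne (ι := Idx) (R := K)).constr_basis K
    (fun p : Idx => lbv p.1 p.2.1 p.2.2.1 p.2.2.2) (a, b, c, d)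
  simpa [Lb, vv, Finsupp.coe_basisSingleOne] using this

def lcv : ℕ → ℕ → ℕ → ℕ → V
  | a+1, b, c, d => tt⁻¹ • Ld (lcv a b c d)
  | 0, b+1, c, d => La (lcv 0 b c d) + (tt - 1) • Ld (lcv 0 b c d)
  | 0, 0, c+1, d => Lb (lcv 0 0 c d)
      - (tt - 1) • (La (Ld (vv 0 0 c d)) - Ld (Ld (vv 0 0 c d)))
  | 0, 0, 0, d => vv 0 0 0 (d+1)

def Lc : V →ₗ[K] V :=
  (Finsupp.basisSingleOne (ι := Idx) (R := K)).constr K fun p : Idx => lcv p.1 p.2.1 p.2.2.1 p.2.2.2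

@[simp] lemma Lc_vv (a b c d : ℕ) : Lc (vv a b c d) = lcv a b c d := by
  have := (Finsupp.basisSingleOne (ι := Idx) (R := K)).constr_basis K
    (fun p : Idx => lcv p.1 p.2.1 p.2.2.1 p.2.2.2) (a, b, c, d)
  simpa [Lc, vv, Finsupp.coe_basisSingleOne] using this


lemma Vext {f g : V →ₗ[K] V} (h : ∀ a b c d : ℕ, f (vv a b c d) = g (vv a b c d)) :
    f = g := by
  refine (Finsupp.basisSingleOne (ι := Idx) (R := K)).ext fun p => ?_
  obtain ⟨a, b, c, d⟩ := p
  simpa [Finsupp.coe_basisSingleOne, vv] using h a b c d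

lemma Vext' {M : Type} [AddCommMonoid M] [Module K M] {f g : V →ₗ[K] M}
    (h : ∀ a b c d : ℕ, f (vv a b c d) = g (vv a b c d)) : f = g := by
  refine (Finsupp.basisSingleOne (ι := Idx) (R := K)).ext fun p => ?_
  obtain ⟨a, b, c, d⟩ := p
  simpa [Finsupp.coe_basisSingleOne, vv] using h a b c d

lemma Ld_La : Ld ∘ₗ La = La ∘ₗ Ld := Vext (by intros; simp)

lemma Ld_La_apply (x : V) : Ld (La x) = La (Ld x) := LinearMap.congr_fun Ld_La x

lemma lbv_b (a b c d : ℕ) :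
    lbv a (b+1) c d = La (lbv a b c d) + (tt - tt ^ 2) • Ld (lbv a b c d) := by
  induction a with
  | zero => simp [lbv]
  | succ a ih =>
    have h1 : lbv (a+1) (b+1) c d = tt • Ld (lbv a (b+1) c d) := by simp [lbv]
    have h2 : lbv (a+1) b c d = tt • Ld (lbv a b c d) := by simp [lbv]
    rw [h1, ih, h2]
    simp [map_add, _root_.map_smul, Ld_La_apply, smul_add, smul_smul, mul_comm]

lemma lcv_b (a b c d : ℕ) :
    lcv a (b+1) c d = La (lcv a b c d) + (tt - 1) • Ld (lcv a b c d) := by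
  induction a with
  | zero => simp [lcv]
  | succ a ih =>
    have h1 : lcv (a+1) (b+1) c d = tt⁻¹ • Ld (lcv a (b+1) c d) := by simp [lcv]
    have h2 : lcv (a+1) b c d = tt⁻¹ • Ld (lcv a b c d) := by simp [lcv]
    rw [h1, ih, h2]
    simp [map_add, _root_.map_smul, Ld_La_apply, smul_add, smul_smul, mul_comm]

lemma Lb_Ld : Lb ∘ₗ Ld = tt • (Ld ∘ₗ Lb) := by
  refine Vext fun a b c d => ?_
  simp [lbv]

lemma Lb_Ld_apply (x : V) : Lb (Ld x) = tt • Ld (Lb x) := by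
  simpa using LinearMap.congr_fun Lb_Ld x

lemma Lc_Ld : Lc ∘ₗ Ld = tt⁻¹ • (Ld ∘ₗ Lc) := by
  refine Vext fun a b c d => ?_
  simp [lcv]

lemma Lc_Ld_apply (x : V) : Lc (Ld x) = tt⁻¹ • Ld (Lc x) := by
  simpa using LinearMap.congr_fun Lc_Ld x

lemma Lb_La_apply (x : V) : Lb (La x) = La (Lb x) + (tt - tt ^ 2) • Ld (Lb x) := by
  have : Lb ∘ₗ La = La ∘ₗ Lb + (tt - tt ^ 2) • (Ld ∘ₗ Lb) := by
    refine Vext fun a b c d => ?_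
    simpa using lbv_b a b c d
  simpa using LinearMap.congr_fun this x

lemma Lc_La_apply (x : V) : Lc (La x) = La (Lc x) + (tt - 1) • Ld (Lc x) := by
  have : Lc ∘ₗ La = La ∘ₗ Lc + (tt - 1) • (Ld ∘ₗ Lc) := by
    refine Vext fun a b c d => ?_
    simpa using lcv_b a b c d
  simpa using LinearMap.congr_fun this x

lemma k1 : (tt - tt ^ 2) * tt⁻¹ = -(tt - 1) := by
  rw [sub_mul, mul_inv_cancel₀ tt_ne, pow_two, mul_assoc, mul_inv_cancel₀ tt_ne, mul_one, neg_sub]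

lemma lcb (a b c d : ℕ) :
    Lc (lbv a b c d) =
      Lb (lcv a b c d) - (tt - 1) • (La (Ld (vv a b c d)) - Ld (Ld (vv a b c d))) := by
  induction a with
  | zero =>
    induction b with
    | zero => simp [lbv, lcv]
    | succ b ih =>
      have hx : lbv 0 (b+1) c d = La (lbv 0 b c d) + (tt - tt ^ 2) • Ld (lbv 0 b c d) := by
        simp [lbv]
      have hy : lcv 0 (b+1) c d = La (lcv 0 b c d) + (tt - 1) • Ld (lcv 0 b c d) := by
        simp [lcv]
      have hL : Lc (lbv 0 (b+1) c d) = La (Lc (lbv 0 b c d)) := by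
        rw [hx, map_add, _root_.map_smul, Lc_La_apply, Lc_Ld_apply, smul_smul, k1, neg_smul,
          add_assoc]
        simp
      have hR : Lb (lcv 0 (b+1) c d)
          - (tt - 1) • (La (Ld (vv 0 (b+1) c d)) - Ld (Ld (vv 0 (b+1) c d)))
          = La (Lb (lcv 0 b c d)
              - (tt - 1) • (La (Ld (vv 0 b c d)) - Ld (Ld (vv 0 b c d)))) := by
        rw [hy, map_add, _root_.map_smul, Lb_La_apply, Lb_Ld_apply, smul_smul,
          add_assoc (La (Lb (lcv 0 b c d))), ← add_smul,
          show (tt - tt ^ 2) + (tt - 1) * tt = 0 by ring, zero_smul, add_zero]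
        simp only [map_sub, _root_.map_smul, Ld_vv, La_vv]
      rw [hL, hR, ih]
  | succ a ih =>
    have h1 : lbv (a+1) b c d = tt • Ld (lbv a b c d) := by simp [lbv]
    have h2 : lcv (a+1) b c d = tt⁻¹ • Ld (lcv a b c d) := by simp [lcv]
    have hL : Lc (lbv (a+1) b c d) = Ld (Lc (lbv a b c d)) := by
      rw [h1, _root_.map_smul, Lc_Ld_apply, smul_smul, mul_inv_cancel₀ tt_ne, one_smul]
    have hR : Lb (lcv (a+1) b c d)
        - (tt - 1) • (La (Ld (vv (a+1) b c d)) - Ld (Ld (vv (a+1) b c d)))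
        = Ld (Lb (lcv a b c d)
            - (tt - 1) • (La (Ld (vv a b c d)) - Ld (Ld (vv a b c d)))) := by
      rw [h2, _root_.map_smul, Lb_Ld_apply, smul_smul, inv_mul_cancel₀ tt_ne, one_smul]
      simp only [map_sub, _root_.map_smul, Ld_vv, La_vv, Ld_La_apply]
    rw [hL, hR, ih]

lemma ptR1 (a b c d : ℕ) :
    Lb (La (vv a b c d)) - La (Lb (vv a b c d)) = (-(tt - 1)) • Lb (Ld (vv a b c d)) := by
  simp only [La_vv, Ld_vv, Lb_vv]
  rw [lbv_b, add_sub_cancel_left, show lbv (a+1) b c d = tt • Ld (lbv a b c d) from by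
    simp [lbv], smul_smul]
  congr 1
  ring

lemma ptR3 (a b c d : ℕ) :
    Lc (La (vv a b c d)) - La (Lc (vv a b c d)) = (tt - 1) • Ld (Lc (vv a b c d)) := by
  simp only [La_vv, Lc_vv]
  rw [lcv_b, add_sub_cancel_left]

lemma ptR4 (a b c d : ℕ) :
    Ld (Lb (vv a b c d)) = (qq ^ 2) • Lb (Ld (vv a b c d)) := by
  simp only [Lb_vv, Ld_vv]
  rw [show lbv (a+1) b c d = tt • Ld (lbv a b c d) from by simp [lbv], smul_smul,
    show (qq ^ 2 : K) * tt = 1 from mul_inv_cancel₀ qq2_ne, one_smul]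

lemma ptR6 (a b c d : ℕ) :
    Ld (Lc (vv a b c d)) = tt • Lc (Ld (vv a b c d)) := by
  simp only [Lc_vv, Ld_vv]
  rw [show lcv (a+1) b c d = tt⁻¹ • Ld (lcv a b c d) from by simp [lcv], smul_smul,
    mul_inv_cancel₀ tt_ne, one_smul]

lemma ptR5 (a b c d : ℕ) :
    Lc (Lb (vv a b c d)) - Lb (Lc (vv a b c d)) =
      (-(tt - 1)) • (La (Ld (vv a b c d)) - Ld (Ld (vv a b c d))) := by
  simp only [Lb_vv, Lc_vv]
  rw [lcb, neg_smul, sub_sub_cancel_left]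

def genOp : MatGen → Module.End K V
  | MatGen.g i j => ![![La, Lb], ![Lc, Ld]] i j

def rho : FO →ₐ[K] Module.End K V := FreeAlgebra.lift K genOp

@[simp] lemma rho_OA (i j : Fin 2) : rho (OA i j) = ![![La, Lb], ![Lc, Ld]] i j := by
  simp [rho, OA, genOp, FreeAlgebra.lift_ι_apply]

lemma rho_rel : ∀ ⦃x y : FO⦄, ReRel OA x y → rho x = rho y := by
  intro x y h
  cases h with
  | r1 =>
    simp only [_root_.map_mul, map_sub, _root_.map_smul, rho_OA, Matrix.cons_val_zero,
      Matrix.cons_val_one, Matrix.head_cons]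
    refine Vext fun a b c d => ?_
    simpa [Module.End.mul_apply, tt] using ptR1 a b c d
  | r2 =>
    simp only [_root_.map_mul, rho_OA, Matrix.cons_val_zero, Matrix.cons_val_one, Matrix.head_cons]
    refine Vext fun a b c d => ?_
    simp [Module.End.mul_apply]
  | r3 =>
    simp only [_root_.map_mul, map_sub, _root_.map_smul, rho_OA, Matrix.cons_val_zero,
      Matrix.cons_val_one, Matrix.head_cons]
    refine Vext fun a b c d => ?_
    simpa [Module.End.mul_apply, tt] using ptR3 a b c d
  | r4 =>
    simp only [_root_.map_mul, _root_.map_smul, rho_OA, Matrix.cons_val_zero,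
      Matrix.cons_val_one, Matrix.head_cons]
    refine Vext fun a b c d => ?_
    simpa [Module.End.mul_apply] using ptR4 a b c d
  | r5 =>
    simp only [_root_.map_mul, map_sub, _root_.map_smul, rho_OA, Matrix.cons_val_zero,
      Matrix.cons_val_one, Matrix.head_cons]
    refine Vext fun a b c d => ?_
    simpa [Module.End.mul_apply, tt] using ptR5 a b c d
  | r6 =>
    simp only [_root_.map_mul, _root_.map_smul, rho_OA, Matrix.cons_val_zero,
      Matrix.cons_val_one, Matrix.head_cons]
    refine Vext fun a b c d => ?_
    simpa [Module.End.mul_apply, tt] using ptR6 a b c d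

def rhoBar : OqM2 →ₐ[K] Module.End K V :=
  RingQuot.liftAlgHom K ⟨rho, rho_rel⟩

@[simp] lemma rhoBar_oa (i j : Fin 2) :
    rhoBar (oa i j) = ![![La, Lb], ![Lc, Ld]] i j := by
  rw [rhoBar, oa, RingQuot.liftAlgHom_mkAlgHom_apply]
  exact rho_OA i j

def ev : OqM2 →ₗ[K] V where
  toFun x := rhoBar x (vv 0 0 0 0)
  map_add' x y := by simp
  map_smul' r x := by simp

lemma Ld_pow (n a b c d : ℕ) : (Ld ^ n) (vv a b c d) = vv (a + n) b c d := by
  induction n generalizing a with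
  | zero => simp
  | succ n ih =>
    rw [pow_succ', Module.End.mul_apply, ih, Ld_vv]
    rfl

lemma La_pow (n a b c d : ℕ) : (La ^ n) (vv a b c d) = vv a (b + n) c d := by
  induction n generalizing b with
  | zero => simp
  | succ n ih =>
    rw [pow_succ', Module.End.mul_apply, ih, La_vv]
    rfl

lemma Lb_pow (n c d : ℕ) : (Lb ^ n) (vv 0 0 c d) = vv 0 0 (c + n) d := by
  induction n generalizing c with
  | zero => simp
  | succ n ih =>
    rw [pow_succ', Module.End.mul_apply, ih, Lb_vv,
      show lbv 0 0 (c+n) d = vv 0 0 (c+n+1) d from by simp [lbv]]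
    rfl

lemma Lc_pow (n d : ℕ) : (Lc ^ n) (vv 0 0 0 d) = vv 0 0 0 (d + n) := by
  induction n generalizing d with
  | zero => simp
  | succ n ih =>
    rw [pow_succ', Module.End.mul_apply, ih, Lc_vv,
      show lcv 0 0 0 (d+n) = vv 0 0 0 (d+n+1) from by simp [lcv]]
    rfl

def Mq (p : Idx) : OqM2 :=
  oa 1 1 ^ p.1 * (oa 0 0 ^ p.2.1 * (oa 0 1 ^ p.2.2.1 * oa 1 0 ^ p.2.2.2))

lemma ev_Mq (p : Idx) : ev (Mq p) = vv p.1 p.2.1 p.2.2.1 p.2.2.2 := by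
  obtain ⟨a, b, c, d⟩ := p
  show rhoBar _ (vv 0 0 0 0) = _
  simp only [Mq, _root_.map_mul, map_pow, rhoBar_oa, Matrix.cons_val_zero, Matrix.cons_val_one,
    Matrix.head_cons, Module.End.mul_apply]
  rw [Lc_pow, Lb_pow, La_pow, Ld_pow]
  simp

def mu : V →ₗ[K] OqM2 :=
  (Finsupp.basisSingleOne (ι := Idx) (R := K)).constr K Mq

@[simp] lemma mu_vv (a b c d : ℕ) : mu (vv a b c d) = Mq (a, b, c, d) := by
  have := (Finsupp.basisSingleOne (ι := Idx) (R := K)).constr_basis K Mq (a, b, c, d)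
  simpa [mu, vv, Finsupp.coe_basisSingleOne] using this

lemma ev_mu (x : V) : ev (mu x) = x := by
  have h : ev ∘ₗ mu = LinearMap.id := by
    refine Vext fun a b c d => ?_
    simp [ev_Mq]
  simpa using LinearMap.congr_fun h x

lemma mu_inj : Function.Injective mu :=
  Function.LeftInverse.injective ev_mu

lemma mk_rel {x y : FO} (h : ReRel OA x y) :
    RingQuot.mkAlgHom K (ReRel OA) x = RingQuot.mkAlgHom K (ReRel OA) y :=
  RingQuot.mkAlgHom_rel K h

lemma mk_oa (i j : Fin 2) : RingQuot.mkAlgHom K (ReRel OA) (OA i j) = oa i j := rfl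

lemma E1 : oa 0 1 * oa 0 0 - oa 0 0 * oa 0 1 = (-(tt - 1)) • (oa 0 1 * oa 1 1) := by
  have h := mk_rel (ReRel.r1 (A := OA))
  simpa [map_sub, _root_.map_mul, _root_.map_smul, mk_oa, tt] using h

lemma E2 : oa 1 1 * oa 0 0 = oa 0 0 * oa 1 1 := by
  have h := mk_rel (ReRel.r2 (A := OA))
  simpa [_root_.map_mul, mk_oa] using h

lemma E3 : oa 1 0 * oa 0 0 - oa 0 0 * oa 1 0 = (tt - 1) • (oa 1 1 * oa 1 0) := by
  have h := mk_rel (ReRel.r3 (A := OA))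
  simpa [map_sub, _root_.map_mul, _root_.map_smul, mk_oa, tt] using h

lemma E4 : oa 1 1 * oa 0 1 = (qq ^ 2) • (oa 0 1 * oa 1 1) := by
  have h := mk_rel (ReRel.r4 (A := OA))
  simpa [_root_.map_mul, _root_.map_smul, mk_oa] using h

lemma E5 : oa 1 0 * oa 0 1 - oa 0 1 * oa 1 0 =
    (-(tt - 1)) • (oa 0 0 * oa 1 1 - oa 1 1 * oa 1 1) := by
  have h := mk_rel (ReRel.r5 (A := OA))
  simpa [map_sub, _root_.map_mul, _root_.map_smul, mk_oa, tt] using h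

lemma E6 : oa 1 1 * oa 1 0 = tt • (oa 1 0 * oa 1 1) := by
  have h := mk_rel (ReRel.r6 (A := OA))
  simpa [_root_.map_mul, _root_.map_smul, mk_oa, tt] using h

lemma E1' : oa 0 1 * oa 0 0 = (-(tt - 1)) • (oa 0 1 * oa 1 1) + oa 0 0 * oa 0 1 :=
  eq_add_of_sub_eq E1

lemma E3' : oa 1 0 * oa 0 0 = (tt - 1) • (oa 1 1 * oa 1 0) + oa 0 0 * oa 1 0 :=
  eq_add_of_sub_eq E3

lemma E5' : oa 1 0 * oa 0 1 =
    (-(tt - 1)) • (oa 0 0 * oa 1 1 - oa 1 1 * oa 1 1) + oa 0 1 * oa 1 0 :=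
  eq_add_of_sub_eq E5

lemma E4' : oa 0 1 * oa 1 1 = tt • (oa 1 1 * oa 0 1) := by
  rw [E4, smul_smul, show tt * qq ^ 2 = 1 from inv_mul_cancel₀ qq2_ne, one_smul]

lemma E6' : oa 1 0 * oa 1 1 = tt⁻¹ • (oa 1 1 * oa 1 0) := by
  rw [E6, smul_smul, show tt⁻¹ * tt = 1 from inv_mul_cancel₀ tt_ne, one_smul]

lemma Mq_d (a b c d : ℕ) : Mq (a+1, b, c, d) = oa 1 1 * Mq (a, b, c, d) := by
  simp [Mq, pow_succ', mul_assoc]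

lemma Mq_a (b c d : ℕ) : Mq (0, b+1, c, d) = oa 0 0 * Mq (0, b, c, d) := by
  simp [Mq, pow_succ', mul_assoc]

lemma Mq_b (c d : ℕ) : Mq (0, 0, c+1, d) = oa 0 1 * Mq (0, 0, c, d) := by
  simp [Mq, pow_succ', mul_assoc]

lemma Mq_c (d : ℕ) : Mq (0, 0, 0, d+1) = oa 1 0 * Mq (0, 0, 0, d) := by
  simp [Mq, pow_succ', mul_assoc]

lemma Td_pt (a b c d : ℕ) : oa 1 1 * Mq (a, b, c, d) = mu (Ld (vv a b c d)) := by
  rw [Ld_vv, mu_vv, Mq_d]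

lemma Td_app (x : V) : oa 1 1 * mu x = mu (Ld x) := by
  have h : LinearMap.mulLeft K (oa 1 1) ∘ₗ mu = mu ∘ₗ Ld := by
    refine Vext' fun a b c d => ?_
    simpa [LinearMap.mulLeft_apply] using Td_pt a b c d
  simpa [LinearMap.mulLeft_apply] using LinearMap.congr_fun h x

lemma comm_da (a : ℕ) : oa 0 0 * oa 1 1 ^ a = oa 1 1 ^ a * oa 0 0 := by
  have h : Commute (oa 0 0) (oa 1 1) := E2.symm
  exact (h.pow_right a).eq

lemma Ta_pt (a b c d : ℕ) : oa 0 0 * Mq (a, b, c, d) = mu (La (vv a b c d)) := by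
  rw [La_vv, mu_vv]
  show _ = Mq (a, b+1, c, d)
  simp only [Mq]
  rw [← mul_assoc, comm_da, mul_assoc, ← mul_assoc (oa 0 0), ← pow_succ']

lemma Ta_app (x : V) : oa 0 0 * mu x = mu (La x) := by
  have h : LinearMap.mulLeft K (oa 0 0) ∘ₗ mu = mu ∘ₗ La := by
    refine Vext' fun a b c d => ?_
    simpa [LinearMap.mulLeft_apply] using Ta_pt a b c d
  simpa [LinearMap.mulLeft_apply] using LinearMap.congr_fun h x

lemma Tb_pt0 (b c d : ℕ) : oa 0 1 * Mq (0, b, c, d) = mu (lbv 0 b c d) := by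
  induction b with
  | zero =>
    rw [show lbv 0 0 c d = vv 0 0 (c+1) d from by simp [lbv], mu_vv, Mq_b]
  | succ b ih =>
    rw [Mq_a, ← mul_assoc, E1', add_mul, smul_mul_assoc, E4', smul_mul_assoc, smul_smul,
      mul_assoc, mul_assoc, ih, Td_app, Ta_app, ← _root_.map_smul, ← map_add]
    congr 1
    rw [show lbv 0 (b+1) c d = La (lbv 0 b c d) + (tt - tt ^ 2) • Ld (lbv 0 b c d) from by
      simp [lbv], show -(tt - 1) * tt = tt - tt ^ 2 from by ring, add_comm]

lemma Tb_pt (a b c d : ℕ) : oa 0 1 * Mq (a, b, c, d) = mu (lbv a b c d) := by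
  induction a with
  | zero => exact Tb_pt0 b c d
  | succ a ih =>
    rw [Mq_d, ← mul_assoc, E4', smul_mul_assoc, mul_assoc, ih, Td_app, ← _root_.map_smul]
    congr 1
    simp [lbv]

lemma Tb_app (x : V) : oa 0 1 * mu x = mu (Lb x) := by
  have h : LinearMap.mulLeft K (oa 0 1) ∘ₗ mu = mu ∘ₗ Lb := by
    refine Vext' fun a b c d => ?_
    simpa [LinearMap.mulLeft_apply, Lb_vv] using Tb_pt a b c d
  simpa [LinearMap.mulLeft_apply] using LinearMap.congr_fun h x

lemma Tc_pt00 (c d : ℕ) : oa 1 0 * Mq (0, 0, c, d) = mu (lcv 0 0 c d) := by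
  induction c with
  | zero =>
    rw [show lcv 0 0 0 d = vv 0 0 0 (d+1) from by simp [lcv], mu_vv, Mq_c]
  | succ c ih =>
    rw [Mq_b, ← mul_assoc, E5', add_mul, smul_mul_assoc, sub_mul, mul_assoc, mul_assoc,
      mul_assoc, ih, Tb_app]
    rw [show oa 1 1 * Mq (0, 0, c, d) = mu (Ld (vv 0 0 c d)) from Td_pt 0 0 c d,
      Ta_app, Td_app, ← map_sub, ← _root_.map_smul, ← map_add]
    congr 1
    rw [show lcv 0 0 (c+1) d = Lb (lcv 0 0 c d)
        - (tt - 1) • (La (Ld (vv 0 0 c d)) - Ld (Ld (vv 0 0 c d))) from by simp [lcv],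
      neg_smul]
    abel

lemma Tc_pt0 (b c d : ℕ) : oa 1 0 * Mq (0, b, c, d) = mu (lcv 0 b c d) := by
  induction b with
  | zero => exact Tc_pt00 c d
  | succ b ih =>
    rw [Mq_a, ← mul_assoc, E3', add_mul, smul_mul_assoc, mul_assoc, mul_assoc, ih,
      Td_app, Ta_app, ← _root_.map_smul, ← map_add]
    congr 1
    rw [show lcv 0 (b+1) c d = La (lcv 0 b c d) + (tt - 1) • Ld (lcv 0 b c d) from by
      simp [lcv], add_comm]

lemma Tc_pt (a b c d : ℕ) : oa 1 0 * Mq (a, b, c, d) = mu (lcv a b c d) := by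
  induction a with
  | zero => exact Tc_pt0 b c d
  | succ a ih =>
    rw [Mq_d, ← mul_assoc, E6', smul_mul_assoc, mul_assoc, ih, Td_app, ← _root_.map_smul]
    congr 1
    simp [lcv]

lemma Tc_app (x : V) : oa 1 0 * mu x = mu (Lc x) := by
  have h : LinearMap.mulLeft K (oa 1 0) ∘ₗ mu = mu ∘ₗ Lc := by
    refine Vext' fun a b c d => ?_
    simpa [LinearMap.mulLeft_apply, Lc_vv] using Tc_pt a b c d
  simpa [LinearMap.mulLeft_apply] using LinearMap.congr_fun h x

lemma mem_range_mul (z : FO) : ∀ y : V,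
    RingQuot.mkAlgHom K (ReRel OA) z * mu y ∈ LinearMap.range mu := by
  induction z using FreeAlgebra.induction with
  | grade0 r =>
    intro y
    rw [AlgHom.commutes, ← Algebra.smul_def]
    exact ⟨r • y, by rw [_root_.map_smul]⟩
  | grade1 m =>
    intro y
    obtain ⟨i, j⟩ := m
    fin_cases i <;> fin_cases j
    · exact ⟨La y, (Ta_app y).symm⟩
    · exact ⟨Lb y, (Tb_app y).symm⟩
    · exact ⟨Lc y, (Tc_app y).symm⟩
    · exact ⟨Ld y, (Td_app y).symm⟩
  | mul x1 x2 h1 h2 =>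
    intro y
    rw [_root_.map_mul, mul_assoc]
    obtain ⟨w, hw⟩ := h2 y
    rw [← hw]
    exact h1 w
  | add x1 x2 h1 h2 =>
    intro y
    rw [map_add, add_mul]
    exact Submodule.add_mem _ (h1 y) (h2 y)

lemma mu_surj : Function.Surjective mu := by
  intro x
  obtain ⟨z, rfl⟩ := RingQuot.mkAlgHom_surjective K (ReRel OA) x
  have h1 : mu (vv 0 0 0 0) = 1 := by simp [Mq]
  have h := mem_range_mul z (vv 0 0 0 0)
  rw [h1, mul_one] at h
  exact h

def muEquiv : V ≃ₗ[K] OqM2 := LinearEquiv.ofBijective mu ⟨mu_inj, mu_surj⟩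

def idxEquiv : Idx ≃ (Fin 4 → ℕ) where
  toFun p := ![p.1, p.2.1, p.2.2.1, p.2.2.2]
  invFun n := (n 0, n 1, n 2, n 3)
  left_inv p := by rfl
  right_inv n := by
    funext i
    fin_cases i <;> rfl

end PBWAux

/-- The ordered monomials `a₂₂^{n₁} a₁₁^{n₂} a₁₂^{n₃} a₂₁^{n₄}`, for `(n₁,n₂,n₃,n₄) ∈ ℕ⁴`,
form a `K`-vector space basis of `O_q(Mat_2)`. -/
theorem pbw_basis_OqM2 :
    ∃ B : Module.Basis (Fin 4 → ℕ) K OqM2,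
      ∀ n : Fin 4 → ℕ,
        B n = oa 1 1 ^ n 0 * oa 0 0 ^ n 1 * oa 0 1 ^ n 2 * oa 1 0 ^ n 3 := by
  refine ⟨((Finsupp.basisSingleOne (ι := PBWAux.Idx) (R := K)).map PBWAux.muEquiv).reindex
    PBWAux.idxEquiv, fun n => ?_⟩
  rw [Module.Basis.reindex_apply, Module.Basis.map_apply]
  have h1 : PBWAux.idxEquiv.symm n = (n 0, n 1, n 2, n 3) := rfl
  rw [h1]
  have h2 : (Finsupp.basisSingleOne (ι := PBWAux.Idx) (R := K)) (n 0, n 1, n 2, n 3)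
      = PBWAux.vv (n 0) (n 1) (n 2) (n 3) := by
    simp [Finsupp.coe_basisSingleOne, PBWAux.vv]
  rw [h2]
  show PBWAux.mu _ = _
  rw [PBWAux.mu_vv]
  simp [PBWAux.Mq, mul_assoc]
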